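/- Recursion for the constant term: with μ_k as above and CT the constant term functional, CT(μ_{k+1}) = ((1-q^{2k+1})(1-q^{2k+2})/(1-q^{k+1})²) · CT(μ_k). -/

import Mathlib

/-- The truncated theta function `μ` written on the unit circle: with `X = e^{iθ}`
standing for `q^{2x}` and `t = q^k`,
`μ(θ) = Π_{j=0}^∞ (1 - X q^j)(1 - X⁻¹ q^{j+1}) / ((1 - X t q^j)(1 - X⁻¹ t q^{j+1}))`. -/
noncomputable def muProd (q : ℝ) (t : ℂ) (θ : ℝ) : ℂ :=
  ∏' j : ℕ,
    ((1 - Complex.exp (Complex.I * θ) * (q:ℂ)^j) *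
     (1 - Complex.exp (-(Complex.I * θ)) * (q:ℂ)^(j+1))) /
    ((1 - Complex.exp (Complex.I * θ) * t * (q:ℂ)^j) *
     (1 - Complex.exp (-(Complex.I * θ)) * t * (q:ℂ)^(j+1)))

/-- The constant term of `μ`, as the average of `μ` over the unit circle. -/
noncomputable def muCT (q : ℝ) (t : ℂ) : ℂ :=
  (2 * Real.pi : ℂ)⁻¹ * ∫ θ in (0:ℝ)..(2*Real.pi), muProd q t θ

open Complex Finset Filter intervalIntegral MeasureTheory
open scoped Real Topology

noncomputable section CTaux

/-- `e^{iθ}` as used by `circleMap`. -/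
def ee (θ : ℝ) : ℂ := Complex.exp (θ * Complex.I)

lemma ee_norm (θ : ℝ) : ‖ee θ‖ = 1 := by
  simp [ee, Complex.norm_exp_ofReal_mul_I]

lemma ee_ne (θ : ℝ) : ee θ ≠ 0 := Complex.exp_ne_zero _

/-- The `j`-th factor of the infinite product. -/
def fc (q : ℝ) (t z : ℂ) (j : ℕ) : ℂ :=
  ((1 - z * (q:ℂ)^j) * (1 - z⁻¹ * (q:ℂ)^(j+1))) /
  ((1 - z * t * (q:ℂ)^j) * (1 - z⁻¹ * t * (q:ℂ)^(j+1)))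

/-- Partial products. -/
def Gf (q : ℝ) (t z : ℂ) (N : ℕ) : ℂ := ∏ j ∈ Finset.range N, fc q t z j

/-- Elementary building-block product. -/
def Pf (q : ℝ) (a z : ℂ) (N : ℕ) : ℂ := ∏ j ∈ Finset.range N, (1 - a * z * (q:ℂ)^j)

lemma muProd_eq (q : ℝ) (t : ℂ) (θ : ℝ) : muProd q t θ = ∏' j, fc q t (ee θ) j := by
  unfold muProd fc
  congr 1; funext j
  rw [Complex.exp_neg, mul_comm Complex.I (θ:ℂ)]
  rfl

lemma one_sub_ne {x : ℂ} (h : ‖x‖ < 1) : (1 : ℂ) - x ≠ 0 := by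
  intro hx
  have h1 : (1:ℂ) = x := by
    have := sub_eq_zero.mp hx; exact this
  rw [← h1] at h; simp at h

lemma norm_one_sub_ge (x : ℂ) : 1 - ‖x‖ ≤ ‖1 - x‖ := by
  simpa using norm_sub_norm_le (1:ℂ) x

section Bounds

variable {q : ℝ} {t z : ℂ}

lemma qpow_le_one (hq0 : 0 < q) (hq1 : q < 1) (j : ℕ) : q ^ j ≤ 1 :=
  pow_le_one₀ hq0.le hq1.le

lemma qpow_pos (hq0 : 0 < q) (j : ℕ) : 0 < q ^ j := pow_pos hq0 j

/-- First denominator factor is nonzero on the annulus `q ≤ ‖z‖ ≤ 1`. -/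
lemma den1_ne (hq0 : 0 < q) (hq1 : q < 1) (ht : ‖t‖ < 1) (hz1 : ‖z‖ ≤ 1) (j : ℕ) :
    (1 : ℂ) - z * t * (q:ℂ)^j ≠ 0 := by
  apply one_sub_ne
  have : ‖z * t * (q:ℂ)^j‖ = ‖z‖ * ‖t‖ * q ^ j := by
    simp [norm_mul, norm_pow, Complex.norm_real, abs_of_pos hq0]
  rw [this]
  calc ‖z‖ * ‖t‖ * q ^ j ≤ 1 * ‖t‖ * 1 := by
        apply mul_le_mul (mul_le_mul hz1 le_rfl (norm_nonneg t) zero_le_one)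
          (qpow_le_one hq0 hq1 j) (qpow_pos hq0 j).le (by positivity)
    _ = ‖t‖ := by ring
    _ < 1 := ht

/-- Second denominator factor is nonzero on the annulus `q ≤ ‖z‖ ≤ 1`. -/
lemma den2_ne (hq0 : 0 < q) (hq1 : q < 1) (ht : ‖t‖ < 1) (hz0 : z ≠ 0) (hzq : q ≤ ‖z‖) (j : ℕ) :
    (1 : ℂ) - z⁻¹ * t * (q:ℂ)^(j+1) ≠ 0 := by
  apply one_sub_ne
  have hzpos : 0 < ‖z‖ := norm_pos_iff.mpr hz0
  have : ‖z⁻¹ * t * (q:ℂ)^(j+1)‖ = ‖z‖⁻¹ * ‖t‖ * q ^ (j+1) := by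
    simp [norm_mul, norm_pow, norm_inv, Complex.norm_real, abs_of_pos hq0]
  rw [this]
  have h1 : ‖z‖⁻¹ ≤ q⁻¹ := by
    exact inv_anti₀ hq0 hzq
  calc ‖z‖⁻¹ * ‖t‖ * q ^ (j+1) ≤ q⁻¹ * ‖t‖ * q ^ (j+1) := by
        apply mul_le_mul_of_nonneg_right (mul_le_mul_of_nonneg_right h1 (norm_nonneg t))
          (qpow_pos hq0 _).le
    _ = ‖t‖ * q ^ j := by field_simp; ring
    _ ≤ ‖t‖ * 1 := by
        exact mul_le_mul_of_nonneg_left (qpow_le_one hq0 hq1 j) (norm_nonneg t)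
    _ < 1 := by simpa using ht

/-- Norm of the denominator of `fc` is bounded below. -/
lemma den_norm_ge (hq0 : 0 < q) (hq1 : q < 1) (ht : ‖t‖ < 1) (hz : ‖z‖ = 1) (j : ℕ) :
    (1 - ‖t‖)^2 ≤ ‖(1 - z * t * (q:ℂ)^j) * (1 - z⁻¹ * t * (q:ℂ)^(j+1))‖ := by
  have hz0 : z ≠ 0 := by intro h; rw [h] at hz; simp at hz
  have hn1 : 1 - ‖t‖ ≤ ‖(1:ℂ) - z * t * (q:ℂ)^j‖ := by
    refine le_trans ?_ (norm_one_sub_ge _)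
    have : ‖z * t * (q:ℂ)^j‖ = ‖t‖ * q^j := by
      simp [norm_mul, norm_pow, Complex.norm_real, abs_of_pos hq0, hz]
    rw [this]
    nlinarith [norm_nonneg t, qpow_le_one hq0 hq1 j, qpow_pos hq0 j]
  have hn2 : 1 - ‖t‖ ≤ ‖(1:ℂ) - z⁻¹ * t * (q:ℂ)^(j+1)‖ := by
    refine le_trans ?_ (norm_one_sub_ge _)
    have hzi : ‖z⁻¹‖ = 1 := by simp [norm_inv, hz]
    have : ‖z⁻¹ * t * (q:ℂ)^(j+1)‖ = ‖t‖ * q^(j+1) := by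
      simp [norm_mul, norm_pow, norm_inv, Complex.norm_real, abs_of_pos hq0, hz]
    rw [this]
    nlinarith [norm_nonneg t, qpow_le_one hq0 hq1 (j+1), qpow_pos hq0 (j+1)]
  have h1 : (0:ℝ) ≤ 1 - ‖t‖ := by linarith
  calc (1 - ‖t‖)^2 = (1 - ‖t‖) * (1 - ‖t‖) := sq (1 - ‖t‖) ▸ (sq (1-‖t‖)).symm ▸ (by ring)
    _ ≤ ‖(1:ℂ) - z * t * (q:ℂ)^j‖ * ‖(1:ℂ) - z⁻¹ * t * (q:ℂ)^(j+1)‖ :=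
        mul_le_mul hn1 hn2 h1 (norm_nonneg _)
    _ = _ := (norm_mul _ _).symm

/-- Key bound: `‖fc - 1‖ ≤ (6/(1-‖t‖)²) q^j` on the unit circle. -/
lemma fc_sub_one_norm (hq0 : 0 < q) (hq1 : q < 1) (ht : ‖t‖ < 1) (hz : ‖z‖ = 1) (j : ℕ) :
    ‖fc q t z j - 1‖ ≤ 6 / (1 - ‖t‖)^2 * q ^ j := by
  have hz0 : z ≠ 0 := by intro h; rw [h] at hz; simp at hz
  have hzi : ‖z⁻¹‖ = 1 := by simp [norm_inv, hz]
  set den : ℂ := (1 - z * t * (q:ℂ)^j) * (1 - z⁻¹ * t * (q:ℂ)^(j+1)) with hden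
  set num : ℂ := (1 - z * (q:ℂ)^j) * (1 - z⁻¹ * (q:ℂ)^(j+1)) with hnum
  have hdge : (1 - ‖t‖)^2 ≤ ‖den‖ := den_norm_ge hq0 hq1 ht hz j
  have htpos : (0:ℝ) < (1 - ‖t‖)^2 := by nlinarith
  have hdne : den ≠ 0 := by
    intro h; rw [h, norm_zero] at hdge; exact absurd hdge (not_le.mpr htpos)
  have heq : fc q t z j - 1 = (num - den) / den := by
    rw [fc, ← hnum, ← hden, div_sub_one hdne]
  rw [heq, norm_div]
  have hnd : ‖num - den‖ ≤ 6 * q ^ j := by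
    have hexp : num - den = (t - 1) * (z * (q:ℂ)^j) + (t - 1) * (z⁻¹ * (q:ℂ)^(j+1))
        + (1 - t^2) * (z * z⁻¹ * (q:ℂ)^(2*j+1)) := by
      rw [hnum, hden]; ring
    rw [hexp]
    have hq1j : ∀ k : ℕ, j ≤ k → q ^ k ≤ q ^ j := fun k hk =>
      pow_le_pow_of_le_one hq0.le hq1.le hk
    have e1 : ‖(t - 1) * (z * (q:ℂ)^j)‖ ≤ 2 * q ^ j := by
      rw [norm_mul, norm_mul, norm_pow, Complex.norm_real, Real.norm_eq_abs, abs_of_pos hq0, hz]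
      have : ‖t - 1‖ ≤ 2 := by
        calc ‖t - 1‖ ≤ ‖t‖ + ‖(1:ℂ)‖ := norm_sub_le t 1
          _ ≤ 2 := by rw [norm_one]; linarith
      nlinarith [qpow_pos hq0 j]
    have e2 : ‖(t - 1) * (z⁻¹ * (q:ℂ)^(j+1))‖ ≤ 2 * q ^ j := by
      rw [norm_mul, norm_mul, norm_pow, Complex.norm_real, Real.norm_eq_abs, abs_of_pos hq0, hzi]
      have h2 : ‖t - 1‖ ≤ 2 := by
        calc ‖t - 1‖ ≤ ‖t‖ + ‖(1:ℂ)‖ := norm_sub_le t 1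
          _ ≤ 2 := by rw [norm_one]; linarith
      have h3 : q ^ (j+1) ≤ q ^ j := hq1j _ (Nat.le_succ j)
      nlinarith [qpow_pos hq0 (j+1)]
    have e3 : ‖(1 - t^2) * (z * z⁻¹ * (q:ℂ)^(2*j+1))‖ ≤ 2 * q ^ j := by
      rw [norm_mul, norm_mul, norm_pow, Complex.norm_real, Real.norm_eq_abs, abs_of_pos hq0]
      have h2 : ‖(1:ℂ) - t^2‖ ≤ 2 := by
        calc ‖(1:ℂ) - t^2‖ ≤ ‖(1:ℂ)‖ + ‖t^2‖ := norm_sub_le 1 (t^2)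
          _ ≤ 2 := by
              simp only [norm_one, norm_pow]
              nlinarith [norm_nonneg t]
      have h3 : q ^ (2*j+1) ≤ q ^ j := hq1j _ (by omega)
      have h4 : ‖z * z⁻¹‖ = 1 := by
        rw [mul_inv_cancel₀ hz0]; simp
      rw [h4]
      nlinarith [qpow_pos hq0 (2*j+1)]
    calc ‖(t - 1) * (z * (q:ℂ)^j) + (t - 1) * (z⁻¹ * (q:ℂ)^(j+1))
        + (1 - t^2) * (z * z⁻¹ * (q:ℂ)^(2*j+1))‖
        ≤ ‖(t - 1) * (z * (q:ℂ)^j) + (t - 1) * (z⁻¹ * (q:ℂ)^(j+1))‖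
          + ‖(1 - t^2) * (z * z⁻¹ * (q:ℂ)^(2*j+1))‖ := norm_add_le _ _
      _ ≤ (‖(t - 1) * (z * (q:ℂ)^j)‖ + ‖(t - 1) * (z⁻¹ * (q:ℂ)^(j+1))‖)
          + ‖(1 - t^2) * (z * z⁻¹ * (q:ℂ)^(2*j+1))‖ := by
            gcongr; exact norm_add_le _ _
      _ ≤ 2 * q^j + 2 * q^j + 2 * q^j := by linarith
      _ = 6 * q^j := by ring
  have hinv : ‖den‖⁻¹ ≤ ((1-‖t‖)^2)⁻¹ := by
    apply inv_anti₀ htpos hdge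
  calc ‖num - den‖ / ‖den‖ = ‖num - den‖ * ‖den‖⁻¹ := div_eq_mul_inv _ _
    _ ≤ (6 * q ^ j) * ((1-‖t‖)^2)⁻¹ := by
        apply mul_le_mul hnd hinv (by positivity) (by positivity)
    _ = 6 / (1 - ‖t‖)^2 * q ^ j := by ring

end Bounds

end CTaux

section Limits

variable {q : ℝ} {t z : ℂ}

lemma hasProd_zero_of_eq_zero {f : ℕ → ℂ} {j0 : ℕ} (h : f j0 = 0) : HasProd f 0 := by
  have hev : ∀ᶠ s in (atTop : Filter (Finset ℕ)), ∏ i ∈ s, f i = 0 := by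
    filter_upwards [Filter.eventually_ge_atTop ({j0} : Finset ℕ)] with s hs
    exact Finset.prod_eq_zero (hs (Finset.mem_singleton_self j0)) h
  exact Tendsto.congr' (by filter_upwards [hev] with s hs using hs.symm) tendsto_const_nhds

lemma fc_ne_zero_of_small {f1 : ℂ} (h : ‖f1 - 1‖ ≤ 1/2) : f1 ≠ 0 := by
  intro h0
  rw [h0] at h
  simp only [zero_sub, norm_neg, norm_one] at h
  norm_num at h

/-- Pointwise convergence of the partial products to `muProd`. -/
lemma tendsto_Gf (hq0 : 0 < q) (hq1 : q < 1) (ht : ‖t‖ < 1) (θ : ℝ) :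
    Tendsto (fun N => Gf q t (ee θ) N) atTop (𝓝 (muProd q t θ)) := by
  rw [muProd_eq]
  by_cases hex : ∃ j, fc q t (ee θ) j = 0
  · obtain ⟨j0, hj0⟩ := hex
    have h0 : HasProd (fun j => fc q t (ee θ) j) 0 := hasProd_zero_of_eq_zero hj0
    rw [h0.tprod_eq]
    exact h0.tendsto_prod_nat
  · push_neg at hex
    have h1t : (0:ℝ) < 1 - ‖t‖ := by linarith
    set K := 6 / (1 - ‖t‖)^2 with hK
    have hKpos : 0 < K := by
      rw [hK]; exact div_pos (by norm_num) (pow_pos h1t 2)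
    obtain ⟨J, hJ⟩ : ∃ J : ℕ, K * q ^ J < 1/2 := by
      have h := tendsto_pow_atTop_nhds_zero_of_lt_one hq0.le hq1
      have h2 : Tendsto (fun n : ℕ => K * q ^ n) atTop (𝓝 0) := by
        simpa using h.const_mul K
      exact (h2.eventually (gt_mem_nhds (by norm_num : (0:ℝ) < 1/2))).exists
    have hlog : Summable fun j => Complex.log (fc q t (ee θ) j) := by
      rw [← summable_nat_add_iff J]
      have hb : ∀ j : ℕ, ‖Complex.log (fc q t (ee θ) (j + J))‖ ≤ 3/2 * (K * q^J) * q ^ j := by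
        intro j
        have hfb : ‖fc q t (ee θ) (j + J) - 1‖ ≤ K * q ^ (j + J) :=
          fc_sub_one_norm hq0 hq1 ht (ee_norm θ) (j + J)
        have hqm : K * q ^ (j + J) ≤ K * q ^ J * q ^ j := by
          rw [pow_add]; ring_nf; exact le_rfl
        have hsmall : ‖fc q t (ee θ) (j + J) - 1‖ ≤ 1/2 := by
          refine hfb.trans (le_trans hqm ?_)
          calc K * q ^ J * q ^ j ≤ K * q ^ J * 1 :=
                mul_le_mul_of_nonneg_left (qpow_le_one hq0 hq1 j) (by positivity)
            _ ≤ 1/2 := by rw [mul_one]; exact hJ.le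
        have := Complex.norm_log_one_add_half_le_self hsmall
        rw [add_sub_cancel] at this
        refine this.trans ?_
        calc 3/2 * ‖fc q t (ee θ) (j + J) - 1‖ ≤ 3/2 * (K * q ^ (j+J)) := by linarith
          _ = 3/2 * (K * q^J) * q ^ j := by rw [pow_add]; ring
      refine Summable.of_norm_bounded ?_ hb
      exact (summable_geometric_of_lt_one hq0.le hq1).mul_left _
    have hm : Multipliable fun j => fc q t (ee θ) j := by
      have := Complex.multipliable_of_summable_log hlog
      exact this
    exact hm.hasProd.tendsto_prod_nat

/-- Uniform bound for the partial products. -/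
lemma Gf_norm_le (hq0 : 0 < q) (hq1 : q < 1) (ht : ‖t‖ < 1) (hz : ‖z‖ = 1) (N : ℕ) :
    ‖Gf q t z N‖ ≤ Real.exp (6 / (1 - ‖t‖)^2 * (1-q)⁻¹) := by
  have h1t : (0:ℝ) < 1 - ‖t‖ := by linarith
  set K := 6 / (1 - ‖t‖)^2 with hK
  have hKpos : 0 < K := by rw [hK]; exact div_pos (by norm_num) (pow_pos h1t 2)
  have h1 : ∀ j : ℕ, ‖fc q t z j‖ ≤ Real.exp (K * q ^ j) := by
    intro j
    have hfb := fc_sub_one_norm hq0 hq1 ht hz j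
    calc ‖fc q t z j‖ = ‖1 + (fc q t z j - 1)‖ := by ring_nf
      _ ≤ 1 + ‖fc q t z j - 1‖ := by
          refine (norm_add_le _ _).trans ?_; simp
      _ ≤ 1 + K * q ^ j := by linarith
      _ ≤ Real.exp (K * q ^ j) := by
          have := Real.add_one_le_exp (K * q ^ j); linarith
  calc ‖Gf q t z N‖ = ∏ j ∈ Finset.range N, ‖fc q t z j‖ := by
        rw [Gf, norm_prod]
    _ ≤ ∏ j ∈ Finset.range N, Real.exp (K * q ^ j) := by
        refine Finset.prod_le_prod (fun j _ => norm_nonneg _) (fun j _ => h1 j)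
    _ = Real.exp (∑ j ∈ Finset.range N, K * q ^ j) := by rw [Real.exp_sum]
    _ ≤ Real.exp (K * (1-q)⁻¹) := by
        apply Real.exp_le_exp.mpr
        rw [← Finset.mul_sum]
        refine mul_le_mul_of_nonneg_left ?_ hKpos.le
        have hs : Summable fun j : ℕ => q ^ j := summable_geometric_of_lt_one hq0.le hq1
        calc ∑ j ∈ Finset.range N, q ^ j ≤ ∑' j : ℕ, q ^ j :=
              Summable.sum_le_tsum _ (fun j _ => (qpow_pos hq0 j).le) hs
          _ = (1-q)⁻¹ := tsum_geometric_of_lt_one hq0.le hq1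

/-- Continuity in `θ` of the partial products. -/
lemma continuous_Gf (hq0 : 0 < q) (hq1 : q < 1) (ht : ‖t‖ < 1) (N : ℕ) :
    Continuous (fun θ : ℝ => Gf q t (ee θ) N) := by
  have hee : Continuous ee := by
    unfold ee; exact Complex.continuous_exp.comp (by continuity)
  have heei : Continuous (fun θ => (ee θ)⁻¹) := hee.inv₀ (fun θ => ee_ne θ)
  unfold Gf
  apply continuous_finset_prod
  intro j _
  unfold fc
  apply Continuous.div
  · exact ((continuous_const.sub (hee.mul continuous_const)).mul
      (continuous_const.sub (heei.mul continuous_const)))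
  · exact ((continuous_const.sub ((hee.mul continuous_const).mul continuous_const)).mul
      (continuous_const.sub ((heei.mul continuous_const).mul continuous_const)))
  · intro θ
    exact mul_ne_zero
      (by
        have := den1_ne hq0 hq1 ht (le_of_eq (ee_norm θ)) j
        simpa [mul_comm, mul_assoc, mul_left_comm] using this)
      (by
        have := den2_ne hq0 hq1 ht (ee_ne θ) (by rw [ee_norm]; exact hq1.le) j
        simpa [mul_comm, mul_assoc, mul_left_comm] using this)

/-- Bound for `muProd` itself. -/
lemma muProd_norm_le (hq0 : 0 < q) (hq1 : q < 1) (ht : ‖t‖ < 1) (θ : ℝ) :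
    ‖muProd q t θ‖ ≤ Real.exp (6 / (1 - ‖t‖)^2 * (1-q)⁻¹) :=
  le_of_tendsto (tendsto_Gf hq0 hq1 ht θ).norm
    (Filter.Eventually.of_forall fun N => Gf_norm_le hq0 hq1 ht (ee_norm θ) N)

/-- The master dominated-convergence limit lemma. -/
lemma tendsto_integral_weighted (hq0 : 0 < q) (hq1 : q < 1) (ht : ‖t‖ < 1)
    {W : ℕ → ℝ → ℂ} {Winf : ℝ → ℂ} {Cw : ℝ}
    (hWc : ∀ᶠ N in atTop, Continuous (W N))
    (hWb : ∀ᶠ N in atTop, ∀ θ, ‖W N θ‖ ≤ Cw)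
    (hWt : ∀ θ, Tendsto (fun N => W N θ) atTop (𝓝 (Winf θ))) :
    Tendsto (fun N => ∫ θ in (0:ℝ)..(2*Real.pi), W N θ * Gf q t (ee θ) N) atTop
      (𝓝 (∫ θ in (0:ℝ)..(2*Real.pi), Winf θ * muProd q t θ)) := by
  set Cb := Real.exp (6 / (1 - ‖t‖)^2 * (1-q)⁻¹) with hCb
  apply intervalIntegral.tendsto_integral_filter_of_dominated_convergence
    (bound := fun _ => Cw * Cb)
  · filter_upwards [hWc] with N hN
    exact (hN.mul (continuous_Gf hq0 hq1 ht N)).aestronglyMeasurable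
  · filter_upwards [hWb] with N hN
    refine Filter.Eventually.of_forall fun θ _ => ?_
    rw [norm_mul]
    exact mul_le_mul (hN θ) (Gf_norm_le hq0 hq1 ht (ee_norm θ) N) (norm_nonneg _)
      (le_trans (norm_nonneg _) (hN θ))
  · exact intervalIntegrable_const
  · refine Filter.Eventually.of_forall fun θ _ => ?_
    exact (hWt θ).mul (tendsto_Gf hq0 hq1 ht θ)

/-- Integrability of weighted `muProd`. -/
lemma intervalIntegrable_weighted (hq0 : 0 < q) (hq1 : q < 1) (ht : ‖t‖ < 1)
    {w : ℝ → ℂ} (hw : Continuous w) :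
    IntervalIntegrable (fun θ => w θ * muProd q t θ) volume 0 (2*Real.pi) := by
  set Cb := Real.exp (6 / (1 - ‖t‖)^2 * (1-q)⁻¹) with hCb
  obtain ⟨Cw, hCw⟩ : ∃ Cw : ℝ, ∀ θ ∈ Set.uIcc (0:ℝ) (2*Real.pi), ‖w θ‖ ≤ Cw := by
    obtain ⟨Cw, hCw⟩ := (isCompact_uIcc.image hw).isBounded.exists_norm_le
    exact ⟨Cw, fun θ hθ => hCw _ (Set.mem_image_of_mem _ hθ)⟩
  rw [intervalIntegrable_iff]
  have hmeas : AEStronglyMeasurable (fun θ => w θ * muProd q t θ)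
      (volume.restrict (Set.uIoc (0:ℝ) (2*Real.pi))) := by
    apply AEStronglyMeasurable.mul hw.aestronglyMeasurable
    exact aestronglyMeasurable_of_tendsto_ae atTop
      (fun N => (continuous_Gf hq0 hq1 ht N).aestronglyMeasurable)
      (Filter.Eventually.of_forall fun θ => tendsto_Gf hq0 hq1 ht θ)
  refine Integrable.mono' (g := fun _ => Cw * Cb) ?_ hmeas ?_
  · apply (integrableOn_const_iff enorm_ne_top).mpr
    right
    rw [Set.uIoc]
    exact measure_Ioc_lt_top
  · rw [MeasureTheory.ae_restrict_iff' measurableSet_uIoc]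
    refine Filter.Eventually.of_forall fun θ hθ => ?_
    rw [norm_mul]
    have h1 : ‖w θ‖ ≤ Cw := hCw θ (Set.uIoc_subset_uIcc hθ)
    exact mul_le_mul h1 (muProd_norm_le hq0 hq1 ht θ) (norm_nonneg _)
      (le_trans (norm_nonneg _) h1)

end Limits

section Algebraic

variable {q : ℝ} {t z a : ℂ}

lemma Pf_succ (N : ℕ) : Pf q a z (N+1) = Pf q a z N * (1 - a*z*(q:ℂ)^N) :=
  Finset.prod_range_succ _ _

/-- The fundamental shift identity. -/
lemma Pf_shift (a z : ℂ) (N : ℕ) :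
    Pf q a ((q:ℂ)*z) N * (1 - a*z) = Pf q a z N * (1 - a*z*(q:ℂ)^N) := by
  have e1 : Pf q a ((q:ℂ)*z) N = ∏ j ∈ Finset.range N, (1 - a*z*(q:ℂ)^(j+1)) := by
    unfold Pf; exact Finset.prod_congr rfl fun j _ => by ring
  rw [e1, show (1:ℂ) - a*z = 1 - a*z*(q:ℂ)^0 by simp,
    ← Finset.prod_range_succ' (fun j => (1 - a*z*(q:ℂ)^j)) N,
    Finset.prod_range_succ]
  rfl

/-- Numerator identity, by induction. -/
lemma num_shift (hz : z ≠ 0) (N : ℕ) :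
    Pf q 1 ((q:ℂ)*z) N * Pf q 1 z⁻¹ N * (1 - z⁻¹*(q:ℂ)^N)
      = -z⁻¹ * (Pf q 1 z N * Pf q (q:ℂ) z⁻¹ N * (1 - z*(q:ℂ)^N)) := by
  induction N with
  | zero =>
    simp only [Pf, Finset.range_zero, Finset.prod_empty, pow_zero, mul_one, one_mul]
    field_simp
    ring
  | succ N ih =>
    rw [Pf_succ, Pf_succ, Pf_succ, Pf_succ]
    linear_combination ((1 - 1*((q:ℂ)*z)*(q:ℂ)^N) * (1 - (q:ℂ)*z⁻¹*(q:ℂ)^N)) * ih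

lemma Pf_q_inv_eq (hq : (q:ℂ) ≠ 0) (hz : z ≠ 0) (N : ℕ) :
    Pf q ((q:ℂ)) (((q:ℂ)*z))⁻¹ N = Pf q 1 z⁻¹ N := by
  unfold Pf
  refine Finset.prod_congr rfl fun j _ => ?_
  rw [mul_inv]
  field_simp

lemma Pf_tq_inv_eq (hq : (q:ℂ) ≠ 0) (hz : z ≠ 0) (N : ℕ) :
    Pf q (t*(q:ℂ)) (((q:ℂ)*z))⁻¹ N = Pf q t z⁻¹ N := by
  unfold Pf
  refine Finset.prod_congr rfl fun j _ => ?_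
  rw [mul_inv]
  field_simp

lemma Pf_tq_eq (N : ℕ) : Pf q (t*(q:ℂ)) z N = Pf q t ((q:ℂ)*z) N := by
  unfold Pf
  exact Finset.prod_congr rfl fun j _ => by ring

/-- Denominator identity. -/
lemma den_shift (hq : (q:ℂ) ≠ 0) (hz : z ≠ 0) (N : ℕ) :
    (Pf q t ((q:ℂ)*z) N * Pf q (t*(q:ℂ)) (((q:ℂ)*z))⁻¹ N) * ((1 - t*z) * (1 - t*z⁻¹*(q:ℂ)^N))
      = (Pf q t z N * Pf q (t*(q:ℂ)) z⁻¹ N) * ((1 - t*z*(q:ℂ)^N) * (1 - t*z⁻¹)) := by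
  have h1 := Pf_shift (q := q) t z N
  have h3 := Pf_shift (q := q) t z⁻¹ N
  rw [Pf_tq_inv_eq hq hz, Pf_tq_eq (z := z⁻¹)]
  linear_combination ((1 - t*z⁻¹*(q:ℂ)^N) * Pf q t z⁻¹ N) * h1
    - (Pf q t z N * (1 - t*z*(q:ℂ)^N)) * h3

/-- `Pf` is nonvanishing when `‖a‖‖z‖ < 1`. -/
lemma Pf_ne (hq0 : 0 < q) (hq1 : q < 1) {r : ℝ} (h : ‖a‖ * ‖z‖ ≤ r) (hr : r < 1) (N : ℕ) :
    Pf q a z N ≠ 0 := by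
  unfold Pf
  refine Finset.prod_ne_zero_iff.mpr fun j _ => one_sub_ne ?_
  have : ‖a * z * (q:ℂ)^j‖ = ‖a‖ * ‖z‖ * q ^ j := by
    rw [norm_mul, norm_mul, norm_pow, Complex.norm_real, Real.norm_eq_abs, abs_of_pos hq0]
  rw [this]
  calc ‖a‖ * ‖z‖ * q ^ j ≤ r * 1 := by
        apply mul_le_mul h (qpow_le_one hq0 hq1 j) (qpow_pos hq0 j).le
          (le_trans (by positivity) h)
    _ < 1 := by rw [mul_one]; exact hr

/-- Multiplied-out form of `Gf` as a quotient of `Pf` products. -/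
lemma Gf_mul_den (hq0 : 0 < q) (hq1 : q < 1) (ht : ‖t‖ < 1) (hz0 : z ≠ 0)
    (hz1 : ‖z‖ ≤ 1) (hzq : q ≤ ‖z‖) (N : ℕ) :
    Gf q t z N * (Pf q t z N * Pf q (t*(q:ℂ)) z⁻¹ N) = Pf q 1 z N * Pf q (q:ℂ) z⁻¹ N := by
  unfold Gf Pf
  rw [← Finset.prod_mul_distrib, ← Finset.prod_mul_distrib, ← Finset.prod_mul_distrib]
  refine Finset.prod_congr rfl fun j _ => ?_
  have hd1 : (1:ℂ) - z * t * (q:ℂ)^j ≠ 0 := den1_ne hq0 hq1 ht hz1 j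
  have hd2 : (1:ℂ) - z⁻¹ * t * (q:ℂ)^(j+1) ≠ 0 := den2_ne hq0 hq1 ht hz0 hzq j
  rw [fc, div_mul_eq_mul_div, div_eq_iff (mul_ne_zero hd1 hd2)]
  ring

end Algebraic

section FE

variable {q : ℝ} {t z : ℂ}

/-- The multiplier in the functional equation. -/
noncomputable def Psi (q : ℝ) (t z : ℂ) (N : ℕ) : ℂ :=
  -((1 - z*(q:ℂ)^N) * (1 - t*z) * (1 - t*z⁻¹*(q:ℂ)^N)) /
    ((1 - z⁻¹*(q:ℂ)^N) * (1 - t*z*(q:ℂ)^N))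

/-- The functional equation for the partial products, multiplied-out form. -/
lemma feq (hq0 : 0 < q) (hq1 : q < 1) (ht : ‖t‖ < 1) (hz : ‖z‖ = 1) (N : ℕ) :
    (z - t) * Gf q t ((q:ℂ)*z) N * ((1 - z⁻¹*(q:ℂ)^N) * (1 - t*z*(q:ℂ)^N))
      = -((1 - z*(q:ℂ)^N) * (1 - t*z) * (1 - t*z⁻¹*(q:ℂ)^N)) * Gf q t z N := by
  have hz0 : z ≠ 0 := by intro h; rw [h] at hz; simp at hz
  have hq : (q:ℂ) ≠ 0 := by exact_mod_cast hq0.ne'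
  have hqz0 : (q:ℂ)*z ≠ 0 := mul_ne_zero hq hz0
  have hqznorm : ‖(q:ℂ)*z‖ = q := by
    rw [norm_mul, Complex.norm_real, Real.norm_eq_abs, abs_of_pos hq0, hz, mul_one]
  have hzinorm : ‖z⁻¹‖ = 1 := by rw [norm_inv, hz]; norm_num
  have hqzinorm : ‖((q:ℂ)*z)⁻¹‖ = q⁻¹ := by rw [norm_inv, hqznorm]
  -- nonvanishing of denominators
  have hDz1 : Pf q t z N ≠ 0 := Pf_ne hq0 hq1 (by rw [hz, mul_one]) ht N
  have hDz2 : Pf q (t*(q:ℂ)) z⁻¹ N ≠ 0 := by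
    refine Pf_ne hq0 hq1 (r := ‖t‖) ?_ ht N
    rw [norm_mul, Complex.norm_real, Real.norm_eq_abs, abs_of_pos hq0, hzinorm, mul_one]
    nlinarith [norm_nonneg t]
  have hDqz1 : Pf q t ((q:ℂ)*z) N ≠ 0 := by
    refine Pf_ne hq0 hq1 (r := ‖t‖) ?_ ht N
    rw [hqznorm]
    nlinarith [norm_nonneg t]
  have hDqz2 : Pf q (t*(q:ℂ)) ((q:ℂ)*z)⁻¹ N ≠ 0 := by
    refine Pf_ne hq0 hq1 (r := ‖t‖) ?_ ht N
    rw [norm_mul, Complex.norm_real, Real.norm_eq_abs, abs_of_pos hq0, hqzinorm]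
    rw [mul_assoc, mul_inv_cancel₀ hq0.ne', mul_one]
  have hGz := Gf_mul_den hq0 hq1 ht hz0 (le_of_eq hz) (by rw [hz]; exact hq1.le) N
  have hGqz := Gf_mul_den hq0 hq1 ht hqz0 (by rw [hqznorm]; exact hq1.le)
    (by rw [hqznorm]) N
  rw [Pf_q_inv_eq hq hz0] at hGqz
  have F1 := num_shift (q := q) hz0 N
  have F2 := den_shift (q := q) (t := t) hq hz0 N
  have F3 : z * z⁻¹ = 1 := mul_inv_cancel₀ hz0
  have key : ((z - t) * Gf q t ((q:ℂ)*z) N * ((1 - z⁻¹*(q:ℂ)^N) * (1 - t*z*(q:ℂ)^N))) *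
      ((Pf q t ((q:ℂ)*z) N * Pf q (t*(q:ℂ)) ((q:ℂ)*z)⁻¹ N) * (Pf q t z N * Pf q (t*(q:ℂ)) z⁻¹ N))
      = (-((1 - z*(q:ℂ)^N) * (1 - t*z) * (1 - t*z⁻¹*(q:ℂ)^N)) * Gf q t z N) *
      ((Pf q t ((q:ℂ)*z) N * Pf q (t*(q:ℂ)) ((q:ℂ)*z)⁻¹ N) *
        (Pf q t z N * Pf q (t*(q:ℂ)) z⁻¹ N)) := by
    linear_combination
      ((z - t) * ((1 - z⁻¹*(q:ℂ)^N) * (1 - t*z*(q:ℂ)^N)) *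
        (Pf q t z N * Pf q (t*(q:ℂ)) z⁻¹ N)) * hGqz
      + (((1 - z*(q:ℂ)^N) * (1 - t*z) * (1 - t*z⁻¹*(q:ℂ)^N)) *
        (Pf q t ((q:ℂ)*z) N * Pf q (t*(q:ℂ)) ((q:ℂ)*z)⁻¹ N)) * hGz
      + ((z - t) * (1 - t*z*(q:ℂ)^N) * (Pf q t z N * Pf q (t*(q:ℂ)) z⁻¹ N)) * F1
      + ((1 - z*(q:ℂ)^N) * (Pf q 1 z N * Pf q (q:ℂ) z⁻¹ N)) * F2
      - ((Pf q 1 z N * Pf q (q:ℂ) z⁻¹ N) * (Pf q t z N * Pf q (t*(q:ℂ)) z⁻¹ N) *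
          (1 - t*z*(q:ℂ)^N) * (1 - z*(q:ℂ)^N)) * F3
  exact mul_right_cancel₀
    (mul_ne_zero (mul_ne_zero hDqz1 hDqz2) (mul_ne_zero hDz1 hDz2)) key

lemma psi_den1_ne (hq0 : 0 < q) (hq1 : q < 1) (hz : ‖z‖ = 1) {N : ℕ} (hN : 1 ≤ N) :
    (1:ℂ) - z⁻¹*(q:ℂ)^N ≠ 0 := by
  apply one_sub_ne
  rw [norm_mul, norm_inv, hz, norm_pow, Complex.norm_real, Real.norm_eq_abs, abs_of_pos hq0]
  simp only [inv_one, one_mul]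
  calc q ^ N ≤ q ^ 1 := pow_le_pow_of_le_one hq0.le hq1.le hN
    _ < 1 := by rw [pow_one]; exact hq1

lemma psi_den2_ne (hq0 : 0 < q) (hq1 : q < 1) (ht : ‖t‖ < 1) (hz : ‖z‖ = 1) (N : ℕ) :
    (1:ℂ) - t*z*(q:ℂ)^N ≠ 0 := by
  apply one_sub_ne
  rw [norm_mul, norm_mul, hz, norm_pow, Complex.norm_real, Real.norm_eq_abs, abs_of_pos hq0]
  calc ‖t‖ * 1 * q ^ N ≤ ‖t‖ * 1 * 1 := by
        apply mul_le_mul_of_nonneg_left (qpow_le_one hq0 hq1 N) (by positivity)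
    _ < 1 := by rw [mul_one, mul_one]; exact ht

/-- The functional equation, division form. -/
lemma feq_div (hq0 : 0 < q) (hq1 : q < 1) (ht : ‖t‖ < 1) (hz : ‖z‖ = 1) {N : ℕ}
    (hN : 1 ≤ N) :
    (z - t) * Gf q t ((q:ℂ)*z) N = Psi q t z N * Gf q t z N := by
  have hd : ((1:ℂ) - z⁻¹*(q:ℂ)^N) * (1 - t*z*(q:ℂ)^N) ≠ 0 :=
    mul_ne_zero (psi_den1_ne hq0 hq1 hz hN) (psi_den2_ne hq0 hq1 ht hz N)
  rw [Psi, div_mul_eq_mul_div, eq_div_iff hd]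
  linear_combination feq hq0 hq1 ht hz N

/-- Bound for `Psi`. -/
lemma Psi_norm_le (hq0 : 0 < q) (hq1 : q < 1) (ht : ‖t‖ < 1) (hz : ‖z‖ = 1) {N : ℕ}
    (hN : 1 ≤ N) :
    ‖Psi q t z N‖ ≤ 8 / ((1 - q) * (1 - ‖t‖)) := by
  have hz0 : z ≠ 0 := by intro h; rw [h] at hz; simp at hz
  have hzi : ‖z⁻¹‖ = 1 := by rw [norm_inv, hz]; norm_num
  have hqN : ‖((q:ℂ))^N‖ = q ^ N := by
    rw [norm_pow, Complex.norm_real, Real.norm_eq_abs, abs_of_pos hq0]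
  have hqN1 : q ^ N ≤ q := by
    calc q ^ N ≤ q ^ 1 := pow_le_pow_of_le_one hq0.le hq1.le hN
      _ = q := pow_one q
  have hnum : ‖(1 - z*(q:ℂ)^N) * (1 - t*z) * (1 - t*z⁻¹*(q:ℂ)^N)‖ ≤ 8 := by
    rw [norm_mul, norm_mul]
    have b1 : ‖(1:ℂ) - z*(q:ℂ)^N‖ ≤ 2 := by
      calc ‖(1:ℂ) - z*(q:ℂ)^N‖ ≤ ‖(1:ℂ)‖ + ‖z*(q:ℂ)^N‖ := norm_sub_le _ _
        _ ≤ 2 := by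
            rw [norm_one, norm_mul, hz, hqN, one_mul]
            nlinarith [qpow_pos hq0 N, qpow_le_one hq0 hq1 N]
    have b2 : ‖(1:ℂ) - t*z‖ ≤ 2 := by
      calc ‖(1:ℂ) - t*z‖ ≤ ‖(1:ℂ)‖ + ‖t*z‖ := norm_sub_le _ _
        _ ≤ 2 := by rw [norm_one, norm_mul, hz, mul_one]; linarith
    have b3 : ‖(1:ℂ) - t*z⁻¹*(q:ℂ)^N‖ ≤ 2 := by
      calc ‖(1:ℂ) - t*z⁻¹*(q:ℂ)^N‖ ≤ ‖(1:ℂ)‖ + ‖t*z⁻¹*(q:ℂ)^N‖ := norm_sub_le _ _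
        _ ≤ 2 := by
            rw [norm_one, norm_mul, norm_mul, hzi, hqN, mul_one]
            nlinarith [qpow_pos hq0 N, qpow_le_one hq0 hq1 N, norm_nonneg t]
    calc ‖(1:ℂ) - z*(q:ℂ)^N‖ * ‖(1:ℂ) - t*z‖ * ‖(1:ℂ) - t*z⁻¹*(q:ℂ)^N‖ ≤ 2 * 2 * 2 := by
          apply mul_le_mul (mul_le_mul b1 b2 (norm_nonneg _) (by norm_num)) b3
            (norm_nonneg _) (by norm_num)
      _ = 8 := by norm_num
  have hden : (1 - q) * (1 - ‖t‖) ≤ ‖(1 - z⁻¹*(q:ℂ)^N) * (1 - t*z*(q:ℂ)^N)‖ := by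
    rw [norm_mul]
    have d1 : 1 - q ≤ ‖(1:ℂ) - z⁻¹*(q:ℂ)^N‖ := by
      refine le_trans ?_ (norm_one_sub_ge _)
      rw [norm_mul, hzi, hqN, one_mul]
      linarith
    have d2 : 1 - ‖t‖ ≤ ‖(1:ℂ) - t*z*(q:ℂ)^N‖ := by
      refine le_trans ?_ (norm_one_sub_ge _)
      rw [norm_mul, norm_mul, hz, hqN]
      nlinarith [norm_nonneg t, qpow_pos hq0 N, qpow_le_one hq0 hq1 N]
    exact mul_le_mul d1 d2 (by linarith) (norm_nonneg _)
  have hdpos : 0 < (1 - q) * (1 - ‖t‖) := by nlinarith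
  rw [Psi, norm_div, norm_neg]
  rw [div_le_div_iff₀ (lt_of_lt_of_le hdpos hden) hdpos]
  calc ‖(1 - z*(q:ℂ)^N) * (1 - t*z) * (1 - t*z⁻¹*(q:ℂ)^N)‖ * ((1 - q) * (1 - ‖t‖))
      ≤ 8 * ((1 - q) * (1 - ‖t‖)) := mul_le_mul_of_nonneg_right hnum hdpos.le
    _ ≤ 8 * ‖(1 - z⁻¹*(q:ℂ)^N) * (1 - t*z*(q:ℂ)^N)‖ := by
        apply mul_le_mul_of_nonneg_left hden (by norm_num)

/-- Pointwise limit of `Psi`. -/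
lemma Psi_tendsto (hq0 : 0 < q) (hq1 : q < 1) (ht : ‖t‖ < 1) (hz : ‖z‖ = 1) :
    Tendsto (fun N => Psi q t z N) atTop (𝓝 (-(1 - t*z))) := by
  have hq : Tendsto (fun N : ℕ => ((q:ℂ))^N) atTop (𝓝 0) := by
    apply tendsto_pow_atTop_nhds_zero_of_norm_lt_one
    rw [Complex.norm_real, Real.norm_eq_abs, abs_of_pos hq0]; exact hq1
  have hnum : Tendsto (fun N => -((1 - z*(q:ℂ)^N) * (1 - t*z) * (1 - t*z⁻¹*(q:ℂ)^N)))
      atTop (𝓝 (-((1 - z*0) * (1 - t*z) * (1 - t*z⁻¹*0)))) := by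
    apply Tendsto.neg
    exact (((tendsto_const_nhds.sub (tendsto_const_nhds.mul hq)).mul tendsto_const_nhds).mul
      (tendsto_const_nhds.sub (tendsto_const_nhds.mul hq)))
  have hden : Tendsto (fun N => (1 - z⁻¹*(q:ℂ)^N) * (1 - t*z*(q:ℂ)^N))
      atTop (𝓝 ((1 - z⁻¹*0) * (1 - t*z*0))) := by
    exact ((tendsto_const_nhds.sub (tendsto_const_nhds.mul hq)).mul
      (tendsto_const_nhds.sub (tendsto_const_nhds.mul hq)))
  have h := hnum.div hden (by norm_num)
  simp only [mul_zero, sub_zero, mul_one, one_mul] at h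
  simpa [Psi, Pi.div_def] using h

/-- Continuity of `θ ↦ Psi q t (ee θ) N`. -/
lemma Psi_continuous (hq0 : 0 < q) (hq1 : q < 1) (ht : ‖t‖ < 1) {N : ℕ} (hN : 1 ≤ N) :
    Continuous (fun θ : ℝ => Psi q t (ee θ) N) := by
  have hee : Continuous ee := by
    unfold ee; exact Complex.continuous_exp.comp (by continuity)
  have heei : Continuous (fun θ => (ee θ)⁻¹) := hee.inv₀ (fun θ => ee_ne θ)
  unfold Psi
  apply Continuous.div
  · apply Continuous.neg
    exact (((continuous_const.sub (hee.mul continuous_const)).mul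
      (continuous_const.sub (continuous_const.mul hee))).mul
      (continuous_const.sub ((continuous_const.mul heei).mul continuous_const)))
  · exact ((continuous_const.sub (heei.mul continuous_const)).mul
      (continuous_const.sub ((continuous_const.mul hee).mul continuous_const)))
  · intro θ
    exact mul_ne_zero (psi_den1_ne hq0 hq1 (ee_norm θ) hN)
      (psi_den2_ne hq0 hq1 ht (ee_norm θ) N)

end FE

section Corr

variable {q : ℝ} {t z : ℂ}

lemma corr_den_ne (hq0 : 0 < q) (hq1 : q < 1) (ht : ‖t‖ < 1) (hz : ‖z‖ = 1) (N : ℕ) :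
    ((1:ℂ) - t*z*(q:ℂ)^N) * (1 - t*(q:ℂ)*z⁻¹*(q:ℂ)^N) ≠ 0 := by
  have hzi : ‖z⁻¹‖ = 1 := by rw [norm_inv, hz]; norm_num
  refine mul_ne_zero (psi_den2_ne hq0 hq1 ht hz N) (one_sub_ne ?_)
  rw [norm_mul, norm_mul, norm_mul, norm_pow, hzi]
  simp only [Complex.norm_real, Real.norm_eq_abs, abs_of_pos hq0]
  have hqq : q * q ^ N ≤ 1 := by nlinarith [qpow_pos hq0 N, qpow_le_one hq0 hq1 N]
  have h1 : ‖t‖ * q * 1 * q ^ N ≤ ‖t‖ * 1 := by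
    have : ‖t‖ * q * 1 * q ^ N = ‖t‖ * (q * q ^ N) := by ring
    rw [this]
    exact mul_le_mul_of_nonneg_left hqq (norm_nonneg t)
  rw [mul_one] at h1
  linarith

/-- Parameter-shift identity, multiplied form. -/
lemma corr_mul (hq0 : 0 < q) (hq1 : q < 1) (ht : ‖t‖ < 1) (hz : ‖z‖ = 1) (N : ℕ) :
    Gf q (t*(q:ℂ)) z N * ((1 - t*z*(q:ℂ)^N) * (1 - t*(q:ℂ)*z⁻¹*(q:ℂ)^N))
      = Gf q t z N * ((1 - t*z) * (1 - t*(q:ℂ)*z⁻¹)) := by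
  have hz0 : z ≠ 0 := by intro h; rw [h] at hz; simp at hz
  have hzi : ‖z⁻¹‖ = 1 := by rw [norm_inv, hz]; norm_num
  have htq : ‖t*(q:ℂ)‖ < 1 := by
    rw [norm_mul, Complex.norm_real, Real.norm_eq_abs, abs_of_pos hq0]
    nlinarith [norm_nonneg t]
  have hG := Gf_mul_den hq0 hq1 ht hz0 (le_of_eq hz) (by rw [hz]; exact hq1.le) N
  have hG' := Gf_mul_den hq0 hq1 htq hz0 (le_of_eq hz) (by rw [hz]; exact hq1.le) N
  have h1 := Pf_shift (q := q) t z N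
  have h3 := Pf_shift (q := q) (t*(q:ℂ)) z⁻¹ N
  -- denominator relation
  have F : (Pf q (t*(q:ℂ)) z N * Pf q ((t*(q:ℂ))*(q:ℂ)) z⁻¹ N) *
      ((1 - t*z) * (1 - t*(q:ℂ)*z⁻¹))
      = (Pf q t z N * Pf q (t*(q:ℂ)) z⁻¹ N) *
      ((1 - t*z*(q:ℂ)^N) * (1 - t*(q:ℂ)*z⁻¹*(q:ℂ)^N)) := by
    rw [Pf_tq_eq, Pf_tq_eq (t := t*(q:ℂ)) (z := z⁻¹)]
    linear_combination (Pf q (t*(q:ℂ)) ((q:ℂ)*z⁻¹) N * (1 - t*(q:ℂ)*z⁻¹)) * h1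
      + (Pf q t z N * (1 - t*z*(q:ℂ)^N)) * h3
  have hD1 : Pf q (t*(q:ℂ)) z N ≠ 0 := by
    refine Pf_ne hq0 hq1 (r := ‖t‖) ?_ ht N
    rw [norm_mul, Complex.norm_real, Real.norm_eq_abs, abs_of_pos hq0, hz, mul_one]
    nlinarith [norm_nonneg t]
  have hD2 : Pf q ((t*(q:ℂ))*(q:ℂ)) z⁻¹ N ≠ 0 := by
    refine Pf_ne hq0 hq1 (r := ‖t‖) ?_ ht N
    rw [norm_mul, norm_mul, hzi, mul_one]
    simp only [Complex.norm_real, Real.norm_eq_abs, abs_of_pos hq0]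
    have hqq : q * q ≤ 1 := by nlinarith
    nlinarith [norm_nonneg t]
  have hD3 : Pf q t z N ≠ 0 := Pf_ne hq0 hq1 (by rw [hz, mul_one]) ht N
  have hD4 : Pf q (t*(q:ℂ)) z⁻¹ N ≠ 0 := by
    refine Pf_ne hq0 hq1 (r := ‖t‖) ?_ ht N
    rw [norm_mul, Complex.norm_real, Real.norm_eq_abs, abs_of_pos hq0, hzi, mul_one]
    nlinarith [norm_nonneg t]
  have key : (Gf q (t*(q:ℂ)) z N * ((1 - t*z*(q:ℂ)^N) * (1 - t*(q:ℂ)*z⁻¹*(q:ℂ)^N))) *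
      ((Pf q (t*(q:ℂ)) z N * Pf q ((t*(q:ℂ))*(q:ℂ)) z⁻¹ N) * (Pf q t z N * Pf q (t*(q:ℂ)) z⁻¹ N))
      = (Gf q t z N * ((1 - t*z) * (1 - t*(q:ℂ)*z⁻¹))) *
      ((Pf q (t*(q:ℂ)) z N * Pf q ((t*(q:ℂ))*(q:ℂ)) z⁻¹ N) *
        (Pf q t z N * Pf q (t*(q:ℂ)) z⁻¹ N)) := by
    linear_combination
      (((1 - t*z*(q:ℂ)^N) * (1 - t*(q:ℂ)*z⁻¹*(q:ℂ)^N)) * (Pf q t z N * Pf q (t*(q:ℂ)) z⁻¹ N)) * hG'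
      - (((1 - t*z) * (1 - t*(q:ℂ)*z⁻¹)) *
        (Pf q (t*(q:ℂ)) z N * Pf q ((t*(q:ℂ))*(q:ℂ)) z⁻¹ N)) * hG
      - (Pf q 1 z N * Pf q (q:ℂ) z⁻¹ N) * F
  exact mul_right_cancel₀
    (mul_ne_zero (mul_ne_zero hD1 hD2) (mul_ne_zero hD3 hD4)) key

/-- Parameter-shift identity, division form. -/
lemma corr_div (hq0 : 0 < q) (hq1 : q < 1) (ht : ‖t‖ < 1) (hz : ‖z‖ = 1) (N : ℕ) :
    Gf q (t*(q:ℂ)) z N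
      = ((1 - t*z) * (1 - t*(q:ℂ)*z⁻¹)) /
          ((1 - t*z*(q:ℂ)^N) * (1 - t*(q:ℂ)*z⁻¹*(q:ℂ)^N)) * Gf q t z N := by
  rw [div_mul_eq_mul_div, eq_div_iff (corr_den_ne hq0 hq1 ht hz N)]
  linear_combination corr_mul hq0 hq1 ht hz N

end Corr

section Cauchy

variable {q : ℝ} {t : ℂ}

lemma fc_differentiableAt (hq0 : 0 < q) (hq1 : q < 1) (ht : ‖t‖ < 1) {w : ℂ}
    (hw1 : ‖w‖ ≤ 1) (hwq : q ≤ ‖w‖) (j : ℕ) :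
    DifferentiableAt ℂ (fun w => fc q t w j) w := by
  have hw0 : w ≠ 0 := by
    intro h; rw [h, norm_zero] at hwq; linarith
  have hinv : DifferentiableAt ℂ (fun w : ℂ => w⁻¹) w := differentiableAt_inv hw0
  unfold fc
  apply DifferentiableAt.div
  · exact ((differentiableAt_const _).sub (differentiableAt_id.mul_const _)).mul
      ((differentiableAt_const _).sub (hinv.mul_const _))
  · exact ((differentiableAt_const _).sub ((differentiableAt_id.mul_const _).mul_const _)).mul
      ((differentiableAt_const _).sub ((hinv.mul_const _).mul_const _))
  · exact mul_ne_zero (den1_ne hq0 hq1 ht hw1 j) (den2_ne hq0 hq1 ht hw0 hwq j)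

lemma Gf_differentiableAt (hq0 : 0 < q) (hq1 : q < 1) (ht : ‖t‖ < 1) {w : ℂ}
    (hw1 : ‖w‖ ≤ 1) (hwq : q ≤ ‖w‖) (N : ℕ) :
    DifferentiableAt ℂ (fun w => Gf q t w N) w := by
  induction N with
  | zero => simpa [Gf] using differentiableAt_const (1:ℂ)
  | succ N ih =>
    have he : (fun w => Gf q t w (N+1)) = fun w => Gf q t w N * fc q t w N :=
      funext fun w => Finset.prod_range_succ _ _
    rw [he]
    exact ih.mul (fc_differentiableAt hq0 hq1 ht hw1 hwq N)

lemma H_differentiableAt (hq0 : 0 < q) (hq1 : q < 1) (ht : ‖t‖ < 1) {w : ℂ}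
    (hw1 : ‖w‖ ≤ 1) (hwq : q ≤ ‖w‖) (N k : ℕ) :
    DifferentiableAt ℂ (fun w => (w⁻¹)^k * (w - t*(q:ℂ)) * Gf q t w N) w := by
  have hw0 : w ≠ 0 := by
    intro h; rw [h, norm_zero] at hwq; linarith
  exact (((differentiableAt_inv hw0).pow k).mul (differentiableAt_id.sub_const _)).mul
    (Gf_differentiableAt hq0 hq1 ht hw1 hwq N)

lemma cauchy_move (hq0 : 0 < q) (hq1 : q < 1) (ht : ‖t‖ < 1) (N k : ℕ) :
    (∮ w in C(0, (1:ℝ)), (w⁻¹)^k * (w - t*(q:ℂ)) * Gf q t w N)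
      = ∮ w in C(0, q), (w⁻¹)^k * (w - t*(q:ℂ)) * Gf q t w N := by
  apply Complex.circleIntegral_eq_of_differentiable_on_annulus_off_countable hq0 hq1.le
    Set.countable_empty
  · intro w hw
    obtain ⟨hw1, hw2⟩ := hw
    rw [Metric.mem_closedBall, dist_zero_right] at hw1
    rw [Metric.mem_ball, dist_zero_right] at hw2
    push_neg at hw2
    exact (H_differentiableAt hq0 hq1 ht hw1 hw2 N k).continuousAt.continuousWithinAt
  · intro w hw
    obtain ⟨⟨hw1, hw2⟩, -⟩ := hw
    rw [Metric.mem_ball, dist_zero_right] at hw1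
    rw [Metric.mem_closedBall, dist_zero_right] at hw2
    push_neg at hw2
    exact H_differentiableAt hq0 hq1 ht hw1.le hw2.le N k

lemma circleMap_one (θ : ℝ) : circleMap 0 1 θ = ee θ := by
  simp [circleMap, ee]

lemma circleMap_q (θ : ℝ) : circleMap 0 q θ = (q:ℂ) * ee θ := by
  simp [circleMap, ee]

lemma cauchy_interval (hq0 : 0 < q) (hq1 : q < 1) (ht : ‖t‖ < 1) (N k : ℕ) :
    (∫ θ in (0:ℝ)..(2*Real.pi),
        (ee θ * Complex.I) * (((ee θ)⁻¹)^k * (ee θ - t*(q:ℂ)) * Gf q t (ee θ) N))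
      = ∫ θ in (0:ℝ)..(2*Real.pi),
        (((q:ℂ) * ee θ) * Complex.I) *
          ((((q:ℂ) * ee θ)⁻¹)^k * ((q:ℂ) * ee θ - t*(q:ℂ)) * Gf q t ((q:ℂ) * ee θ) N) := by
  have h := cauchy_move hq0 hq1 ht N k
  simp only [circleIntegral, deriv_circleMap, smul_eq_mul, circleMap_one, circleMap_q,
    Complex.ofReal_one, one_mul] at h
  exact h

/-- First Fourier relation (from `k = 1`). -/
lemma rel0 (hq0 : 0 < q) (hq1 : q < 1) (ht : ‖t‖ < 1) {N : ℕ} (hN : 1 ≤ N) :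
    (∫ θ in (0:ℝ)..(2*Real.pi), (ee θ - t*(q:ℂ)) * Gf q t (ee θ) N)
      = (q:ℂ) * ∫ θ in (0:ℝ)..(2*Real.pi), Psi q t (ee θ) N * Gf q t (ee θ) N := by
  have hq : (q:ℂ) ≠ 0 := by exact_mod_cast hq0.ne'
  have h := cauchy_interval hq0 hq1 ht N 1
  have hL : (∫ θ in (0:ℝ)..(2*Real.pi),
      (ee θ * Complex.I) * (((ee θ)⁻¹)^1 * (ee θ - t*(q:ℂ)) * Gf q t (ee θ) N))
      = Complex.I * ∫ θ in (0:ℝ)..(2*Real.pi), (ee θ - t*(q:ℂ)) * Gf q t (ee θ) N := by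
    rw [← intervalIntegral.integral_const_mul]
    apply intervalIntegral.integral_congr
    intro θ _
    have h1 : ee θ * (ee θ)⁻¹ = 1 := mul_inv_cancel₀ (ee_ne θ)
    linear_combination (Complex.I * (ee θ - t*(q:ℂ)) * Gf q t (ee θ) N) * h1
  have hR : (∫ θ in (0:ℝ)..(2*Real.pi),
      (((q:ℂ) * ee θ) * Complex.I) *
        ((((q:ℂ) * ee θ)⁻¹)^1 * ((q:ℂ) * ee θ - t*(q:ℂ)) * Gf q t ((q:ℂ) * ee θ) N))
      = Complex.I * ((q:ℂ) *
          ∫ θ in (0:ℝ)..(2*Real.pi), Psi q t (ee θ) N * Gf q t (ee θ) N) := by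
    rw [← mul_assoc, ← intervalIntegral.integral_const_mul]
    apply intervalIntegral.integral_congr
    intro θ _
    have hfe := feq_div hq0 hq1 ht (ee_norm θ) hN
    have h1 : ((q:ℂ) * ee θ) * ((q:ℂ) * ee θ)⁻¹ = 1 :=
      mul_inv_cancel₀ (mul_ne_zero hq (ee_ne θ))
    calc ((q:ℂ) * ee θ) * Complex.I *
        ((((q:ℂ) * ee θ)⁻¹)^1 * ((q:ℂ) * ee θ - t*(q:ℂ)) * Gf q t ((q:ℂ) * ee θ) N)
        = (((q:ℂ) * ee θ) * ((q:ℂ) * ee θ)⁻¹) * Complex.I * ((q:ℂ) *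
            ((ee θ - t) * Gf q t ((q:ℂ) * ee θ) N)) := by ring
      _ = Complex.I * (q:ℂ) * ((ee θ - t) * Gf q t ((q:ℂ) * ee θ) N) := by
          rw [h1]; ring
      _ = Complex.I * (q:ℂ) * (Psi q t (ee θ) N * Gf q t (ee θ) N) := by rw [hfe]
      _ = _ := by ring
  rw [hL, hR] at h
  exact mul_left_cancel₀ Complex.I_ne_zero h

/-- Second Fourier relation (from `k = 2`). -/
lemma rel1 (hq0 : 0 < q) (hq1 : q < 1) (ht : ‖t‖ < 1) {N : ℕ} (hN : 1 ≤ N) :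
    (∫ θ in (0:ℝ)..(2*Real.pi), (1 - t*(q:ℂ)*(ee θ)⁻¹) * Gf q t (ee θ) N)
      = ∫ θ in (0:ℝ)..(2*Real.pi), (ee θ)⁻¹ * Psi q t (ee θ) N * Gf q t (ee θ) N := by
  have hq : (q:ℂ) ≠ 0 := by exact_mod_cast hq0.ne'
  have h := cauchy_interval hq0 hq1 ht N 2
  have hL : (∫ θ in (0:ℝ)..(2*Real.pi),
      (ee θ * Complex.I) * (((ee θ)⁻¹)^2 * (ee θ - t*(q:ℂ)) * Gf q t (ee θ) N))
      = Complex.I * ∫ θ in (0:ℝ)..(2*Real.pi), (1 - t*(q:ℂ)*(ee θ)⁻¹) * Gf q t (ee θ) N := by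
    rw [← intervalIntegral.integral_const_mul]
    apply intervalIntegral.integral_congr
    intro θ _
    have h1 : ee θ * (ee θ)⁻¹ = 1 := mul_inv_cancel₀ (ee_ne θ)
    linear_combination (Complex.I * Gf q t (ee θ) N *
      (ee θ * (ee θ)⁻¹ + 1 - t*(q:ℂ)*(ee θ)⁻¹)) * h1
  have hR : (∫ θ in (0:ℝ)..(2*Real.pi),
      (((q:ℂ) * ee θ) * Complex.I) *
        ((((q:ℂ) * ee θ)⁻¹)^2 * ((q:ℂ) * ee θ - t*(q:ℂ)) * Gf q t ((q:ℂ) * ee θ) N))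
      = Complex.I *
          ∫ θ in (0:ℝ)..(2*Real.pi), (ee θ)⁻¹ * Psi q t (ee θ) N * Gf q t (ee θ) N := by
    rw [← intervalIntegral.integral_const_mul]
    apply intervalIntegral.integral_congr
    intro θ _
    have hfe := feq_div hq0 hq1 ht (ee_norm θ) hN
    have h1 : ((q:ℂ) * ee θ) * ((q:ℂ) * ee θ)⁻¹ = 1 :=
      mul_inv_cancel₀ (mul_ne_zero hq (ee_ne θ))
    have h2 : ((q:ℂ) * ee θ)⁻¹ = (q:ℂ)⁻¹ * (ee θ)⁻¹ := by rw [mul_inv]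
    have h3 : (q:ℂ) * (q:ℂ)⁻¹ = 1 := mul_inv_cancel₀ hq
    calc ((q:ℂ) * ee θ) * Complex.I *
        ((((q:ℂ) * ee θ)⁻¹)^2 * ((q:ℂ) * ee θ - t*(q:ℂ)) * Gf q t ((q:ℂ) * ee θ) N)
        = (((q:ℂ) * ee θ) * ((q:ℂ) * ee θ)⁻¹) * Complex.I *
            (((q:ℂ) * ee θ)⁻¹ * ((q:ℂ) * (ee θ - t)) * Gf q t ((q:ℂ) * ee θ) N) := by ring
      _ = Complex.I * (((q:ℂ)⁻¹ * (ee θ)⁻¹) * ((q:ℂ) * (ee θ - t)) *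
            Gf q t ((q:ℂ) * ee θ) N) := by rw [h1, h2]; ring
      _ = Complex.I * (((q:ℂ) * (q:ℂ)⁻¹) * ((ee θ)⁻¹ *
            ((ee θ - t) * Gf q t ((q:ℂ) * ee θ) N))) := by ring
      _ = Complex.I * ((ee θ)⁻¹ * (Psi q t (ee θ) N * Gf q t (ee θ) N)) := by
          rw [h3, hfe]; ring
      _ = Complex.I * ((ee θ)⁻¹ * Psi q t (ee θ) N * Gf q t (ee θ) N) := by ring
  rw [hL, hR] at h
  exact mul_left_cancel₀ Complex.I_ne_zero h

end Cauchy

theorem constant_term_recursion (q : ℝ) (hq0 : 0 < q) (hq1 : q < 1)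
    (t : ℂ) (ht : ‖t‖ < 1) :
    muCT q (t * q)
      = ((1 - t^2 * (q:ℂ)) * (1 - t^2 * (q:ℂ)^2) / (1 - t * (q:ℂ))^2) * muCT q t := by
  have hπ : (0:ℝ) < Real.pi := Real.pi_pos
  have hq : (q:ℂ) ≠ 0 := by exact_mod_cast hq0.ne'
  have h1t : (0:ℝ) < 1 - ‖t‖ := by linarith
  have htqn : ‖t*(q:ℂ)‖ < 1 := by
    rw [norm_mul, Complex.norm_real, Real.norm_eq_abs, abs_of_pos hq0]
    nlinarith [norm_nonneg t]
  have h1tq : (1:ℂ) - t*(q:ℂ) ≠ 0 := one_sub_ne htqn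
  have hee : Continuous ee := by
    unfold ee; exact Complex.continuous_exp.comp (by continuity)
  have heei : Continuous (fun θ => (ee θ)⁻¹) := hee.inv₀ (fun θ => ee_ne θ)
  -- the three basic integrals
  set I0 : ℂ := ∫ θ in (0:ℝ)..(2*Real.pi), muProd q t θ with hI0
  set Ip : ℂ := ∫ θ in (0:ℝ)..(2*Real.pi), ee θ * muProd q t θ with hIp0
  set Im : ℂ := ∫ θ in (0:ℝ)..(2*Real.pi), (ee θ)⁻¹ * muProd q t θ with hIm0
  -- integrability
  have int0 : IntervalIntegrable (fun θ => muProd q t θ) volume 0 (2*Real.pi) := by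
    have := intervalIntegrable_weighted hq0 hq1 ht (w := fun _ => (1:ℂ)) continuous_const
    simpa using this
  have intp : IntervalIntegrable (fun θ => ee θ * muProd q t θ) volume 0 (2*Real.pi) :=
    intervalIntegrable_weighted hq0 hq1 ht hee
  have intm : IntervalIntegrable (fun θ => (ee θ)⁻¹ * muProd q t θ) volume 0 (2*Real.pi) :=
    intervalIntegrable_weighted hq0 hq1 ht heei
  -- linear combinations of the three integrals
  have hcomb : ∀ a b c : ℂ,
      (∫ θ in (0:ℝ)..(2*Real.pi), (a + b * ee θ + c * (ee θ)⁻¹) * muProd q t θ)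
        = a * I0 + b * Ip + c * Im := by
    intro a b c
    have he : (fun θ => (a + b * ee θ + c * (ee θ)⁻¹) * muProd q t θ)
        = fun θ => a * muProd q t θ +
            (b * (ee θ * muProd q t θ) + c * ((ee θ)⁻¹ * muProd q t θ)) :=
      funext fun θ => by ring
    rw [he, intervalIntegral.integral_add (int0.const_mul a)
      ((intp.const_mul b).add (intm.const_mul c)),
      intervalIntegral.integral_add (intp.const_mul b) (intm.const_mul c),
      intervalIntegral.integral_const_mul, intervalIntegral.integral_const_mul,
      intervalIntegral.integral_const_mul]
    ring
  -- first relation, limit of rel0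
  have E0 : (-(t*(q:ℂ))) * I0 + 1 * Ip + 0 * Im
      = (q:ℂ) * ((-1) * I0 + t * Ip + 0 * Im) := by
    have hA : Tendsto (fun N => ∫ θ in (0:ℝ)..(2*Real.pi),
        (ee θ - t*(q:ℂ)) * Gf q t (ee θ) N) atTop
        (𝓝 (∫ θ in (0:ℝ)..(2*Real.pi), (ee θ - t*(q:ℂ)) * muProd q t θ)) := by
      apply tendsto_integral_weighted hq0 hq1 ht (W := fun _ θ => ee θ - t*(q:ℂ)) (Cw := 2)
      · exact Filter.Eventually.of_forall fun N => hee.sub continuous_const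
      · refine Filter.Eventually.of_forall fun N θ => ?_
        calc ‖ee θ - t*(q:ℂ)‖ ≤ ‖ee θ‖ + ‖t*(q:ℂ)‖ := norm_sub_le _ _
          _ ≤ 2 := by rw [ee_norm]; linarith
      · exact fun θ => tendsto_const_nhds
    have hB : Tendsto (fun N => (q:ℂ) * ∫ θ in (0:ℝ)..(2*Real.pi),
        Psi q t (ee θ) N * Gf q t (ee θ) N) atTop
        (𝓝 ((q:ℂ) * ∫ θ in (0:ℝ)..(2*Real.pi), (-(1 - t * ee θ)) * muProd q t θ)) := by
      apply Tendsto.const_mul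
      apply tendsto_integral_weighted hq0 hq1 ht (W := fun N θ => Psi q t (ee θ) N)
        (Cw := 8 / ((1 - q) * (1 - ‖t‖)))
      · filter_upwards [Filter.eventually_ge_atTop 1] with N hN
        exact Psi_continuous hq0 hq1 ht hN
      · filter_upwards [Filter.eventually_ge_atTop 1] with N hN
        exact fun θ => Psi_norm_le hq0 hq1 ht (ee_norm θ) hN
      · exact fun θ => Psi_tendsto hq0 hq1 ht (ee_norm θ)
    have hB' : Tendsto (fun N => ∫ θ in (0:ℝ)..(2*Real.pi),
        (ee θ - t*(q:ℂ)) * Gf q t (ee θ) N) atTop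
        (𝓝 ((q:ℂ) * ∫ θ in (0:ℝ)..(2*Real.pi), (-(1 - t * ee θ)) * muProd q t θ)) := by
      apply hB.congr'
      filter_upwards [Filter.eventually_ge_atTop 1] with N hN
      exact (rel0 hq0 hq1 ht hN).symm
    have heq := tendsto_nhds_unique hA hB'
    have hL : (∫ θ in (0:ℝ)..(2*Real.pi), (ee θ - t*(q:ℂ)) * muProd q t θ)
        = (-(t*(q:ℂ))) * I0 + 1 * Ip + 0 * Im := by
      rw [← hcomb]
      apply intervalIntegral.integral_congr
      intro θ _; ring
    have hR : (∫ θ in (0:ℝ)..(2*Real.pi), (-(1 - t * ee θ)) * muProd q t θ)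
        = (-1) * I0 + t * Ip + 0 * Im := by
      rw [← hcomb]
      apply intervalIntegral.integral_congr
      intro θ _; ring
    rw [hL, hR] at heq
    exact heq
  -- second relation, limit of rel1
  have E1 : 1 * I0 + 0 * Ip + (-(t*(q:ℂ))) * Im = t * I0 + 0 * Ip + (-1) * Im := by
    have hA : Tendsto (fun N => ∫ θ in (0:ℝ)..(2*Real.pi),
        (1 - t*(q:ℂ)*(ee θ)⁻¹) * Gf q t (ee θ) N) atTop
        (𝓝 (∫ θ in (0:ℝ)..(2*Real.pi), (1 - t*(q:ℂ)*(ee θ)⁻¹) * muProd q t θ)) := by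
      apply tendsto_integral_weighted hq0 hq1 ht
        (W := fun _ θ => 1 - t*(q:ℂ)*(ee θ)⁻¹) (Cw := 2)
      · exact Filter.Eventually.of_forall fun N =>
          continuous_const.sub (continuous_const.mul heei)
      · refine Filter.Eventually.of_forall fun N θ => ?_
        have hzi : ‖(ee θ)⁻¹‖ = 1 := by rw [norm_inv, ee_norm]; norm_num
        calc ‖(1:ℂ) - t*(q:ℂ)*(ee θ)⁻¹‖ ≤ ‖(1:ℂ)‖ + ‖t*(q:ℂ)*(ee θ)⁻¹‖ := norm_sub_le _ _
          _ ≤ 2 := by rw [norm_one, norm_mul, hzi, mul_one]; linarith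
      · exact fun θ => tendsto_const_nhds
    have hB : Tendsto (fun N => ∫ θ in (0:ℝ)..(2*Real.pi),
        (ee θ)⁻¹ * Psi q t (ee θ) N * Gf q t (ee θ) N) atTop
        (𝓝 (∫ θ in (0:ℝ)..(2*Real.pi),
          ((ee θ)⁻¹ * (-(1 - t * ee θ))) * muProd q t θ)) := by
      apply tendsto_integral_weighted hq0 hq1 ht
        (W := fun N θ => (ee θ)⁻¹ * Psi q t (ee θ) N) (Cw := 8 / ((1 - q) * (1 - ‖t‖)))
      · filter_upwards [Filter.eventually_ge_atTop 1] with N hN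
        exact heei.mul (Psi_continuous hq0 hq1 ht hN)
      · filter_upwards [Filter.eventually_ge_atTop 1] with N hN
        intro θ
        have hzi : ‖(ee θ)⁻¹‖ = 1 := by rw [norm_inv, ee_norm]; norm_num
        rw [norm_mul, hzi, one_mul]
        exact Psi_norm_le hq0 hq1 ht (ee_norm θ) hN
      · exact fun θ => tendsto_const_nhds.mul (Psi_tendsto hq0 hq1 ht (ee_norm θ))
    have hB' : Tendsto (fun N => ∫ θ in (0:ℝ)..(2*Real.pi),
        (1 - t*(q:ℂ)*(ee θ)⁻¹) * Gf q t (ee θ) N) atTop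
        (𝓝 (∫ θ in (0:ℝ)..(2*Real.pi),
          ((ee θ)⁻¹ * (-(1 - t * ee θ))) * muProd q t θ)) := by
      apply hB.congr'
      filter_upwards [Filter.eventually_ge_atTop 1] with N hN
      exact (rel1 hq0 hq1 ht hN).symm
    have heq := tendsto_nhds_unique hA hB'
    have hL : (∫ θ in (0:ℝ)..(2*Real.pi), (1 - t*(q:ℂ)*(ee θ)⁻¹) * muProd q t θ)
        = 1 * I0 + 0 * Ip + (-(t*(q:ℂ))) * Im := by
      rw [← hcomb]
      apply intervalIntegral.integral_congr
      intro θ _; ring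
    have hR : (∫ θ in (0:ℝ)..(2*Real.pi), ((ee θ)⁻¹ * (-(1 - t * ee θ))) * muProd q t θ)
        = t * I0 + 0 * Ip + (-1) * Im := by
      rw [← hcomb]
      apply intervalIntegral.integral_congr
      intro θ _
      have h1 : (ee θ)⁻¹ * ee θ = 1 := inv_mul_cancel₀ (ee_ne θ)
      linear_combination (t * muProd q t θ) * h1
    rw [hL, hR] at heq
    exact heq
  -- the t ↦ tq integral
  have E2 : (∫ θ in (0:ℝ)..(2*Real.pi), muProd q (t*(q:ℂ)) θ)
      = (1 + t^2*(q:ℂ)) * I0 + (-t) * Ip + (-(t*(q:ℂ))) * Im := by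
    have hA : Tendsto (fun N => ∫ θ in (0:ℝ)..(2*Real.pi),
        (1:ℂ) * Gf q (t*(q:ℂ)) (ee θ) N) atTop
        (𝓝 (∫ θ in (0:ℝ)..(2*Real.pi), (1:ℂ) * muProd q (t*(q:ℂ)) θ)) := by
      apply tendsto_integral_weighted hq0 hq1 htqn (W := fun _ _ => (1:ℂ)) (Cw := 1)
      · exact Filter.Eventually.of_forall fun N => continuous_const
      · exact Filter.Eventually.of_forall fun N θ => by rw [norm_one]
      · exact fun θ => tendsto_const_nhds
    have hB : Tendsto (fun N => ∫ θ in (0:ℝ)..(2*Real.pi),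
        (((1 - t*ee θ) * (1 - t*(q:ℂ)*(ee θ)⁻¹)) /
          ((1 - t*ee θ*(q:ℂ)^N) * (1 - t*(q:ℂ)*(ee θ)⁻¹*(q:ℂ)^N))) * Gf q t (ee θ) N)
        atTop
        (𝓝 (∫ θ in (0:ℝ)..(2*Real.pi),
          ((1 - t*ee θ) * (1 - t*(q:ℂ)*(ee θ)⁻¹)) * muProd q t θ)) := by
      have hnum2 : ∀ θ : ℝ, ‖(1 - t*ee θ) * (1 - t*(q:ℂ)*(ee θ)⁻¹)‖ ≤ 4 := by
        intro θ
        have hzi : ‖(ee θ)⁻¹‖ = 1 := by rw [norm_inv, ee_norm]; norm_num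
        rw [norm_mul]
        have b1 : ‖(1:ℂ) - t*ee θ‖ ≤ 2 := by
          calc ‖(1:ℂ) - t*ee θ‖ ≤ ‖(1:ℂ)‖ + ‖t*ee θ‖ := norm_sub_le _ _
            _ ≤ 2 := by rw [norm_one, norm_mul, ee_norm, mul_one]; linarith
        have b2 : ‖(1:ℂ) - t*(q:ℂ)*(ee θ)⁻¹‖ ≤ 2 := by
          calc ‖(1:ℂ) - t*(q:ℂ)*(ee θ)⁻¹‖ ≤ ‖(1:ℂ)‖ + ‖t*(q:ℂ)*(ee θ)⁻¹‖ := norm_sub_le _ _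
            _ ≤ 2 := by rw [norm_one, norm_mul, hzi, mul_one]; linarith
        calc ‖(1:ℂ) - t*ee θ‖ * ‖(1:ℂ) - t*(q:ℂ)*(ee θ)⁻¹‖ ≤ 2 * 2 :=
              mul_le_mul b1 b2 (norm_nonneg _) (by norm_num)
          _ = 4 := by norm_num
      have hden2 : ∀ (θ : ℝ) (N : ℕ),
          (1 - ‖t‖)^2 ≤ ‖(1 - t*ee θ*(q:ℂ)^N) * (1 - t*(q:ℂ)*(ee θ)⁻¹*(q:ℂ)^N)‖ := by
        intro θ N
        have hzi : ‖(ee θ)⁻¹‖ = 1 := by rw [norm_inv, ee_norm]; norm_num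
        have hqN : ‖((q:ℂ))^N‖ = q ^ N := by
          rw [norm_pow, Complex.norm_real, Real.norm_eq_abs, abs_of_pos hq0]
        rw [norm_mul]
        have d1 : 1 - ‖t‖ ≤ ‖(1:ℂ) - t*ee θ*(q:ℂ)^N‖ := by
          refine le_trans ?_ (norm_one_sub_ge _)
          rw [norm_mul, norm_mul, ee_norm, hqN]
          nlinarith [norm_nonneg t, qpow_pos hq0 N, qpow_le_one hq0 hq1 N]
        have d2 : 1 - ‖t‖ ≤ ‖(1:ℂ) - t*(q:ℂ)*(ee θ)⁻¹*(q:ℂ)^N‖ := by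
          refine le_trans ?_ (norm_one_sub_ge _)
          rw [norm_mul, norm_mul, norm_mul, hzi, hqN, Complex.norm_real,
            Real.norm_eq_abs, abs_of_pos hq0]
          have hqq : q * q ^ N ≤ 1 := by
            nlinarith [qpow_pos hq0 N, qpow_le_one hq0 hq1 N]
          have hb : ‖t‖ * q * 1 * q ^ N ≤ ‖t‖ * 1 := by
            have he : ‖t‖ * q * 1 * q ^ N = ‖t‖ * (q * q ^ N) := by ring
            rw [he]
            exact mul_le_mul_of_nonneg_left hqq (norm_nonneg t)
          rw [mul_one] at hb
          linarith
        calc (1 - ‖t‖)^2 = (1 - ‖t‖) * (1 - ‖t‖) := by ring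
          _ ≤ _ := mul_le_mul d1 d2 h1t.le (norm_nonneg _)
      apply tendsto_integral_weighted hq0 hq1 ht (Cw := 4 / (1 - ‖t‖)^2)
      · refine Filter.Eventually.of_forall fun N => ?_
        apply Continuous.div
        · exact (continuous_const.sub (continuous_const.mul hee)).mul
            (continuous_const.sub (continuous_const.mul heei))
        · exact ((continuous_const.sub ((continuous_const.mul hee).mul continuous_const)).mul
            (continuous_const.sub ((continuous_const.mul heei).mul continuous_const)))
        · exact fun θ => corr_den_ne hq0 hq1 ht (ee_norm θ) N
      · refine Filter.Eventually.of_forall fun N θ => ?_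
        rw [norm_div]
        have hd := hden2 θ N
        have hdpos : (0:ℝ) < (1 - ‖t‖)^2 := by positivity
        rw [div_le_div_iff₀ (lt_of_lt_of_le hdpos hd) hdpos]
        calc ‖(1 - t*ee θ) * (1 - t*(q:ℂ)*(ee θ)⁻¹)‖ * (1 - ‖t‖)^2
            ≤ 4 * (1 - ‖t‖)^2 := mul_le_mul_of_nonneg_right (hnum2 θ) hdpos.le
          _ ≤ 4 * ‖(1 - t*ee θ*(q:ℂ)^N) * (1 - t*(q:ℂ)*(ee θ)⁻¹*(q:ℂ)^N)‖ :=
              mul_le_mul_of_nonneg_left hd (by norm_num)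
      · intro θ
        have hqN : Tendsto (fun N : ℕ => ((q:ℂ))^N) atTop (𝓝 0) := by
          apply tendsto_pow_atTop_nhds_zero_of_norm_lt_one
          rw [Complex.norm_real, Real.norm_eq_abs, abs_of_pos hq0]; exact hq1
        have hden : Tendsto (fun N => (1 - t*ee θ*(q:ℂ)^N) * (1 - t*(q:ℂ)*(ee θ)⁻¹*(q:ℂ)^N))
            atTop (𝓝 ((1 - t*ee θ*0) * (1 - t*(q:ℂ)*(ee θ)⁻¹*0))) :=
          ((tendsto_const_nhds.sub (tendsto_const_nhds.mul hqN)).mul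
            (tendsto_const_nhds.sub (tendsto_const_nhds.mul hqN)))
        have h := (tendsto_const_nhds (α := ℕ)
          (x := (1 - t*ee θ) * (1 - t*(q:ℂ)*(ee θ)⁻¹))).div hden (by norm_num)
        simpa [Pi.div_def] using h
    have hB' : Tendsto (fun N => ∫ θ in (0:ℝ)..(2*Real.pi),
        (1:ℂ) * Gf q (t*(q:ℂ)) (ee θ) N) atTop
        (𝓝 (∫ θ in (0:ℝ)..(2*Real.pi),
          ((1 - t*ee θ) * (1 - t*(q:ℂ)*(ee θ)⁻¹)) * muProd q t θ)) := by
      apply hB.congr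
      intro N
      apply intervalIntegral.integral_congr
      intro θ _
      simp only [one_mul]
      exact (corr_div hq0 hq1 ht (ee_norm θ) N).symm
    have heq := tendsto_nhds_unique hA hB'
    have hL : (∫ θ in (0:ℝ)..(2*Real.pi), (1:ℂ) * muProd q (t*(q:ℂ)) θ)
        = ∫ θ in (0:ℝ)..(2*Real.pi), muProd q (t*(q:ℂ)) θ := by
      apply intervalIntegral.integral_congr
      intro θ _; simp only [one_mul]
    have hR : (∫ θ in (0:ℝ)..(2*Real.pi),
        ((1 - t*ee θ) * (1 - t*(q:ℂ)*(ee θ)⁻¹)) * muProd q t θ)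
        = (1 + t^2*(q:ℂ)) * I0 + (-t) * Ip + (-(t*(q:ℂ))) * Im := by
      rw [← hcomb]
      apply intervalIntegral.integral_congr
      intro θ _
      have h1 : (ee θ)⁻¹ * ee θ = 1 := inv_mul_cancel₀ (ee_ne θ)
      linear_combination (t^2*(q:ℂ) * muProd q t θ) * h1
    rw [hL, hR] at heq
    exact heq
  -- solve the linear system
  have hIpEq : Ip * (1 - t*(q:ℂ)) = -(q:ℂ)*(1-t)*I0 := by linear_combination E0
  have hImEq : Im * (1 - t*(q:ℂ)) = -(1-t)*I0 := by linear_combination E1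
  have hB2 : ((1:ℂ) - t*(q:ℂ))^2 ≠ 0 := pow_ne_zero 2 h1tq
  unfold muCT
  rw [E2, div_mul_eq_mul_div, eq_div_iff hB2]
  linear_combination ((2*Real.pi:ℂ))⁻¹ * (-t) * (1 - t*(q:ℂ)) * hIpEq
    + ((2*Real.pi:ℂ))⁻¹ * (-(t*(q:ℂ))) * (1 - t*(q:ℂ)) * hImEq
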